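/- Let T, S be commuting bounded operators on Hilbert spaces H, and suppose T = S* V where V is an isometry commuting with both T and S, and S = T* V. Then T is hyponormal. -/

import Mathlib

open ContinuousLinearMap

/-- Let `T, S` be commuting bounded operators on a Hilbert space, `V` an isometry
commuting with both, with `T = S* V` and `S = T* V`.  Then `T` is hyponormal
(`T*T - TT* ≥ 0`). -/
theorem hyponormal_of_Gamma_isometry_component {H : Type*} [NormedAddCommGroup H]
    [InnerProductSpace ℂ H] [CompleteSpace H] (T S V : H →L[ℂ] H)
    (hV : adjoint V * V = 1) (hTV : T * V = V * T) (hSV : S * V = V * S)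
    (hTS : T * S = S * T) (hT : T = adjoint S * V) (hS : S = adjoint T * V) :
    (adjoint T * T - T * adjoint T).IsPositive := by
  -- V is an isometry
  have hVnorm : ∀ y : H, ‖V y‖ = ‖y‖ := by
    intro y
    have hVVy : adjoint V (V y) = y := by
      have := congrFun (congrArg DFunLike.coe hV) y
      simpa [mul_apply] using this
    have h1 : inner ℂ (V y) (V y) = inner ℂ y y := by
      rw [← adjoint_inner_left, hVVy]
    have h3 : ‖V y‖ ^ 2 = ‖y‖ ^ 2 := by
      rw [← inner_self_eq_norm_sq (𝕜 := ℂ), ← inner_self_eq_norm_sq (𝕜 := ℂ), h1]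
    calc ‖V y‖ = Real.sqrt (‖V y‖ ^ 2) := (Real.sqrt_sq (norm_nonneg _)).symm
      _ = Real.sqrt (‖y‖ ^ 2) := by rw [h3]
      _ = ‖y‖ := Real.sqrt_sq (norm_nonneg _)
  -- ‖V*‖ ≤ 1
  have hVop : ‖adjoint V‖ ≤ 1 := by
    rw [← star_eq_adjoint, norm_star]
    exact opNorm_le_bound V zero_le_one (fun y => by rw [hVnorm, one_mul])
  -- ‖S x‖ = ‖T x‖
  have hST : ∀ x : H, ‖S x‖ = ‖T x‖ := by
    intro x
    have hSx : S x = adjoint T (V x) := by rw [hS]; simp [mul_apply]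
    have hTx : T x = adjoint S (V x) := by rw [hT]; simp [mul_apply]
    have h1 : inner ℂ (S x) (S x) = inner ℂ (T x) (T x) := by
      calc inner ℂ (S x) (S x) = inner ℂ (adjoint T (V x)) (S x) := by rw [← hSx]
        _ = inner ℂ (V x) (T (S x)) := adjoint_inner_left T (S x) (V x)
        _ = inner ℂ (V x) (S (T x)) := by
            have := congrFun (congrArg DFunLike.coe hTS) x
            change T (S x) = S (T x) at this
            rw [this]
        _ = inner ℂ (adjoint S (V x)) (T x) := (adjoint_inner_left S (T x) (V x)).symm
        _ = inner ℂ (T x) (T x) := by rw [← hTx]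
    have h3 : ‖S x‖ ^ 2 = ‖T x‖ ^ 2 := by
      rw [← inner_self_eq_norm_sq (𝕜 := ℂ), ← inner_self_eq_norm_sq (𝕜 := ℂ), h1]
    calc ‖S x‖ = Real.sqrt (‖S x‖ ^ 2) := (Real.sqrt_sq (norm_nonneg _)).symm
      _ = Real.sqrt (‖T x‖ ^ 2) := by rw [h3]
      _ = ‖T x‖ := Real.sqrt_sq (norm_nonneg _)
  -- ‖T* x‖ ≤ ‖T x‖
  have hkey : ∀ x : H, ‖adjoint T x‖ ≤ ‖T x‖ := by
    intro x
    have hT' : adjoint T = adjoint V * S := by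
      conv_lhs => rw [hT]
      rw [← star_eq_adjoint (adjoint S * V), star_mul]
      simp [star_eq_adjoint, adjoint_adjoint]
    calc ‖adjoint T x‖ = ‖adjoint V (S x)‖ := by rw [hT']; simp [mul_apply]
      _ ≤ ‖adjoint V‖ * ‖S x‖ := le_opNorm _ _
      _ ≤ 1 * ‖S x‖ := by gcongr
      _ = ‖T x‖ := by rw [one_mul, hST]
  rw [isPositive_def']; constructor
  · rw [IsSelfAdjoint]
    simp only [star_sub, star_mul, star_eq_adjoint, adjoint_adjoint]
  · intro x
    have h1 : (adjoint T * T - T * adjoint T) x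
        = adjoint T (T x) - T (adjoint T x) := by
      simp [mul_apply, sub_apply]
    have e1 : inner ℂ (adjoint T (T x)) x = inner ℂ (T x) (T x) :=
      adjoint_inner_left T x (T x)
    have e2 : inner ℂ (T (adjoint T x)) x
        = inner ℂ (adjoint T x) (adjoint T x) :=
      (adjoint_inner_right T (adjoint T x) x).symm
    rw [reApplyInnerSelf_apply, h1, inner_sub_left, e1, e2, map_sub,
      inner_self_eq_norm_sq, inner_self_eq_norm_sq]
    have h2 : ‖adjoint T x‖ ^ 2 ≤ ‖T x‖ ^ 2 :=
      pow_le_pow_left₀ (norm_nonneg _) (hkey x) 2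
    linarith
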